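/- If X is a Birkhoff subcategory of a semi-abelian category C, then X is semi-abelian. -/

import Mathlib

open CategoryTheory CategoryTheory.Limits

universe v u v' u'

variable {C : Type u} [Category.{v} C]

/-- An internal relation on an object `X`: a pair of jointly monic morphisms. -/
structure RelOn (X : C) where
  R : C
  r1 : R ⟶ X
  r2 : R ⟶ X
  jmono : ∀ {Z : C} (f g : Z ⟶ R), f ≫ r1 = g ≫ r1 → f ≫ r2 = g ≫ r2 → f = g

namespace RelOn

variable {X : C} (ρ : RelOn X)

def Reflexive : Prop :=
  ∃ δ : X ⟶ ρ.R, δ ≫ ρ.r1 = 𝟙 X ∧ δ ≫ ρ.r2 = 𝟙 X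

def Symmetric : Prop :=
  ∃ σ : ρ.R ⟶ ρ.R, σ ≫ ρ.r1 = ρ.r2 ∧ σ ≫ ρ.r2 = ρ.r1

/-- Transitivity, formulated with generalized elements. -/
def Transitive : Prop :=
  ∀ {Z : C} (a b : Z ⟶ ρ.R), a ≫ ρ.r2 = b ≫ ρ.r1 →
    ∃ t : Z ⟶ ρ.R, t ≫ ρ.r1 = a ≫ ρ.r1 ∧ t ≫ ρ.r2 = b ≫ ρ.r2

def IsEquivalence : Prop := ρ.Reflexive ∧ ρ.Symmetric ∧ ρ.Transitive

/-- The relation is effective: it is the kernel pair of some morphism. -/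
def Effective : Prop :=
  ∃ (Y : C) (f : X ⟶ Y) (h : ρ.r1 ≫ f = ρ.r2 ≫ f),
    Nonempty (IsLimit (PullbackCone.mk ρ.r1 ρ.r2 h))

end RelOn

/-- A Mal'tsev category: every internal reflexive relation is an equivalence relation. -/
class MaltsevCat (C : Type u) [Category.{v} C] : Prop where
  refl_is_equiv : ∀ {X : C} (ρ : RelOn X), ρ.Reflexive → ρ.Symmetric ∧ ρ.Transitive

/-- A regular category: finitely complete, coequalizers of kernel pairs,
pullback-stable regular epimorphisms. -/
class RegularCat (C : Type u) [Category.{v} C] : Prop where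
  hasFiniteLimits : HasFiniteLimits C
  hasCoeqOfKernelPair : ∀ {A B R : C} (f : A ⟶ B) (p1 p2 : R ⟶ A) (h : p1 ≫ f = p2 ≫ f),
    Nonempty (IsLimit (PullbackCone.mk p1 p2 h)) → HasCoequalizer p1 p2
  regEpiStable : ∀ {P A B Z : C} (f : A ⟶ B) (g : Z ⟶ B) (p1 : P ⟶ A) (p2 : P ⟶ Z)
    (h : p1 ≫ f = p2 ≫ g), Nonempty (IsLimit (PullbackCone.mk p1 p2 h)) →
    Nonempty (RegularEpi f) → Nonempty (RegularEpi p2)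

/-- A Barr-exact category: regular and every equivalence relation is effective. -/
class ExactCat (C : Type u) [Category.{v} C] extends RegularCat C : Prop where
  effective : ∀ {X : C} (ρ : RelOn X), ρ.IsEquivalence → ρ.Effective

/-- An internal reflexive graph. -/
structure ReflexiveGraph (C : Type u) [Category.{v} C] where
  C1 : C
  C0 : C
  d : C1 ⟶ C0
  c : C1 ⟶ C0
  e : C0 ⟶ C1
  ed : e ≫ d = 𝟙 C0
  ec : e ≫ c = 𝟙 C0

/-- An internal category structure on a reflexive graph, formulated via
generalized elements (equivalent to the usual pullback formulation in a
finitely complete category). `comp a b _` is the composite "`a` followed by `b`". -/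
structure CatStruct {C : Type u} [Category.{v} C] (G : ReflexiveGraph C) where
  comp : ∀ {Z : C} (a b : Z ⟶ G.C1), a ≫ G.c = b ≫ G.d → (Z ⟶ G.C1)
  comp_natural : ∀ {W Z : C} (w : W ⟶ Z) (a b : Z ⟶ G.C1) (h : a ≫ G.c = b ≫ G.d)
      (h' : (w ≫ a) ≫ G.c = (w ≫ b) ≫ G.d),
      w ≫ comp a b h = comp (w ≫ a) (w ≫ b) h'
  comp_d : ∀ {Z : C} (a b : Z ⟶ G.C1) (h : a ≫ G.c = b ≫ G.d), comp a b h ≫ G.d = a ≫ G.d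
  comp_c : ∀ {Z : C} (a b : Z ⟶ G.C1) (h : a ≫ G.c = b ≫ G.d), comp a b h ≫ G.c = b ≫ G.c
  comp_unit_l : ∀ {Z : C} (a : Z ⟶ G.C1) (h : (a ≫ G.d ≫ G.e) ≫ G.c = a ≫ G.d),
      comp (a ≫ G.d ≫ G.e) a h = a
  comp_unit_r : ∀ {Z : C} (a : Z ⟶ G.C1) (h : a ≫ G.c = (a ≫ G.c ≫ G.e) ≫ G.d),
      comp a (a ≫ G.c ≫ G.e) h = a
  comp_assoc : ∀ {Z : C} (a b c' : Z ⟶ G.C1) (h1 : a ≫ G.c = b ≫ G.d)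
      (h2 : b ≫ G.c = c' ≫ G.d)
      (h3 : comp a b h1 ≫ G.c = c' ≫ G.d)
      (h4 : a ≫ G.c = comp b c' h2 ≫ G.d),
      comp (comp a b h1) c' h3 = comp a (comp b c' h2) h4

/-- The internal category has inverses, i.e. is an internal groupoid. -/
def CatStruct.HasInverses {C : Type u} [Category.{v} C] {G : ReflexiveGraph C}
    (S : CatStruct G) : Prop :=
  ∃ i : G.C1 ⟶ G.C1, i ≫ G.d = G.c ∧ i ≫ G.c = G.d ∧
    (∀ {Z : C} (a : Z ⟶ G.C1) (h : a ≫ G.c = (a ≫ i) ≫ G.d),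
      S.comp a (a ≫ i) h = a ≫ G.d ≫ G.e) ∧
    (∀ {Z : C} (a : Z ⟶ G.C1) (h : (a ≫ i) ≫ G.c = a ≫ G.d),
      S.comp (a ≫ i) a h = a ≫ G.c ≫ G.e)

/-- An internal groupoid. -/
structure GroupoidObj (C : Type u) [Category.{v} C] where
  graph : ReflexiveGraph C
  str : CatStruct graph
  hasInv : str.HasInverses

/-- Internal functors between internal groupoids. -/
@[ext]
structure GrpdHom (A B : GroupoidObj C) where
  f0 : A.graph.C0 ⟶ B.graph.C0
  f1 : A.graph.C1 ⟶ B.graph.C1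
  hd : f1 ≫ B.graph.d = A.graph.d ≫ f0
  hc : f1 ≫ B.graph.c = A.graph.c ≫ f0
  he : A.graph.e ≫ f1 = f0 ≫ B.graph.e
  hm : ∀ {Z : C} (a b : Z ⟶ A.graph.C1) (h : a ≫ A.graph.c = b ≫ A.graph.d)
      (h' : (a ≫ f1) ≫ B.graph.c = (b ≫ f1) ≫ B.graph.d),
      A.str.comp a b h ≫ f1 = B.str.comp (a ≫ f1) (b ≫ f1) h'

lemma GrpdHom.cond {A B : GroupoidObj C} (f : GrpdHom A B) {Z : C} {a b : Z ⟶ A.graph.C1}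
    (h : a ≫ A.graph.c = b ≫ A.graph.d) :
    (a ≫ f.f1) ≫ B.graph.c = (b ≫ f.f1) ≫ B.graph.d := by
  rw [Category.assoc, f.hc, Category.assoc, f.hd, ← Category.assoc, h, Category.assoc]

def GrpdHom.id (A : GroupoidObj C) : GrpdHom A A where
  f0 := 𝟙 _
  f1 := 𝟙 _
  hd := by simp
  hc := by simp
  he := by simp
  hm := by intros; simp

def GrpdHom.comp {A B D : GroupoidObj C} (f : GrpdHom A B) (g : GrpdHom B D) : GrpdHom A D where
  f0 := f.f0 ≫ g.f0
  f1 := f.f1 ≫ g.f1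
  hd := by rw [Category.assoc, g.hd, ← Category.assoc, f.hd, Category.assoc]
  hc := by rw [Category.assoc, g.hc, ← Category.assoc, f.hc, Category.assoc]
  he := by rw [← Category.assoc, f.he, Category.assoc, g.he, ← Category.assoc]
  hm := by
    intro Z a b h h'
    rw [← Category.assoc, f.hm a b h (f.cond h), g.hm _ _ (f.cond h) (g.cond (f.cond h))]
    simp only [Category.assoc]

instance : Category (GroupoidObj C) where
  Hom := GrpdHom
  id := GrpdHom.id
  comp := GrpdHom.comp
  id_comp f := by apply GrpdHom.ext <;> simp [GrpdHom.comp, GrpdHom.id]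
  comp_id f := by apply GrpdHom.ext <;> simp [GrpdHom.comp, GrpdHom.id]
  assoc f g h := by apply GrpdHom.ext <;> simp [GrpdHom.comp]

/-- Coerce a morphism of internal groupoids to its underlying data. -/
def homToGrpdHom {A B : GroupoidObj C} (f : A ⟶ B) : GrpdHom A B := f

/-- Morphisms of reflexive graphs. -/
@[ext]
structure RGHom (A B : ReflexiveGraph C) where
  f0 : A.C0 ⟶ B.C0
  f1 : A.C1 ⟶ B.C1
  hd : f1 ≫ B.d = A.d ≫ f0
  hc : f1 ≫ B.c = A.c ≫ f0
  he : A.e ≫ f1 = f0 ≫ B.e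

instance : Category (ReflexiveGraph C) where
  Hom := RGHom
  id A := ⟨𝟙 _, 𝟙 _, by simp, by simp, by simp⟩
  comp f g := ⟨f.f0 ≫ g.f0, f.f1 ≫ g.f1,
    by rw [Category.assoc, g.hd, ← Category.assoc, f.hd, Category.assoc],
    by rw [Category.assoc, g.hc, ← Category.assoc, f.hc, Category.assoc],
    by rw [← Category.assoc, f.he, Category.assoc, g.he, ← Category.assoc]⟩
  id_comp f := by apply RGHom.ext <;> simp
  comp_id f := by apply RGHom.ext <;> simp
  assoc f g h := by apply RGHom.ext <;> simp

def homToRGHom {A B : ReflexiveGraph C} (f : A ⟶ B) : RGHom A B := f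

/-- The forgetful functor from internal groupoids to reflexive graphs. -/
def forgetToRG (C : Type u) [Category.{v} C] : GroupoidObj C ⥤ ReflexiveGraph C where
  obj A := A.graph
  map f := ⟨(homToGrpdHom f).f0, (homToGrpdHom f).f1, (homToGrpdHom f).hd,
    (homToGrpdHom f).hc, (homToGrpdHom f).he⟩
  map_id A := by apply RGHom.ext <;> rfl
  map_comp f g := by apply RGHom.ext <;> rfl

/-- A discrete internal groupoid: the unit is an isomorphism. -/
def GroupoidObj.IsDiscrete (A : GroupoidObj C) : Prop := IsIso A.graph.e

/-- An internal double groupoid (an internal groupoid in internal groupoids) is a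
2-groupoid when its groupoid of objects is discrete. -/
def Is2Grpd (D : GroupoidObj (GroupoidObj C)) : Prop := D.graph.C0.IsDiscrete

/-- Zero morphisms, defined without extra structure: morphisms factoring through a
zero object. -/
def IsZeroMor {A B : C} (f : A ⟶ B) : Prop :=
  ∃ (Z : C) (_ : IsZero Z) (g : A ⟶ Z) (h : Z ⟶ B), f = g ≫ h

/-- `κ` is a kernel of `α`. -/
def IsKernelOf {A B K : C} (κ : K ⟶ A) (α : A ⟶ B) : Prop :=
  IsZeroMor (κ ≫ α) ∧ ∀ {Z : C} (g : Z ⟶ A), IsZeroMor (g ≫ α) → ∃! l : Z ⟶ K, l ≫ κ = g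

/-- A split extension with kernel object `Xo`. -/
structure SplitExtOn (Xo : C) where
  A : C
  B : C
  κ : Xo ⟶ A
  α : A ⟶ B
  β : B ⟶ A
  split : β ≫ α = 𝟙 B
  ker : IsKernelOf κ α

/-- A generic split extension with kernel `Xo`: terminal among split extensions
with kernel `Xo` (morphisms being the identity on the kernel). -/
def IsGenericSplitExt {Xo : C} (E : SplitExtOn Xo) : Prop :=
  ∀ E' : SplitExtOn Xo, ∃! vw : (E'.A ⟶ E.A) × (E'.B ⟶ E.B),
    E'.κ ≫ vw.1 = E.κ ∧ vw.1 ≫ E.α = E'.α ≫ vw.2 ∧ E'.β ≫ vw.1 = vw.2 ≫ E.β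

/-- Action representability: every object admits a generic split extension. -/
def ActionRepresentable (C : Type u) [Category.{v} C] : Prop :=
  ∀ X : C, ∃ E : SplitExtOn X, IsGenericSplitExt E

/-- A protoadditive functor: preserves kernels of split epimorphisms. -/
def Protoadditive {X : Type u'} [Category.{v'} X] (H : X ⥤ C) : Prop :=
  ∀ {A B K : X} (α : A ⟶ B) (β : B ⟶ A), β ≫ α = 𝟙 B →
    ∀ (κ : K ⟶ A), IsKernelOf κ α → IsKernelOf (H.map κ) (H.map α)

/-- A semi-abelian category: pointed, Barr-exact, protomodular (split short five
lemma), with binary coproducts. -/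
class SemiAbelian (C : Type u) [Category.{v} C] extends ExactCat C : Prop where
  hasZeroObject : HasZeroObject C
  hasBinaryCoproducts : HasBinaryCoproducts C
  ssfl : ∀ {A B B' Co : C} (k : A ⟶ B) (p : B ⟶ Co) (s : Co ⟶ B)
      (k' : A ⟶ B') (p' : B' ⟶ Co) (s' : Co ⟶ B') (b : B ⟶ B'),
      s ≫ p = 𝟙 Co → s' ≫ p' = 𝟙 Co → IsKernelOf k p → IsKernelOf k' p' →
      k ≫ b = k' → b ≫ p' = p → s ≫ b = s' → IsIso b

/-- A natural Mal'tsev operation on a category with binary products. -/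
def IsNaturallyMaltsev (C : Type u) [Category.{v} C] [HasBinaryProducts C] : Prop :=
  ∃ p : ∀ A : C, (A ⨯ A) ⨯ A ⟶ A,
    (∀ {A B : C} (f : A ⟶ B), prod.map (prod.map f f) f ≫ p B = p A ≫ f) ∧
    (∀ A : C, prod.lift (prod.lift prod.fst prod.snd) prod.snd ≫ p A
        = (prod.fst : A ⨯ A ⟶ A)) ∧
    (∀ A : C, prod.lift (prod.lift prod.fst prod.fst) prod.snd ≫ p A
        = (prod.snd : A ⨯ A ⟶ A))

section Aux


variable {C : Type u} [Category.{v} C] (P : C → Prop) [Reflective (ObjectProperty.ι P)]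

local notation "ι" => ObjectProperty.ι P

/-- The reflection unit. -/
noncomputable def s19eta (Z : C) :
    Z ⟶ ((reflector (ObjectProperty.ι P)).obj Z).obj :=
  (reflectorAdjunction (ObjectProperty.ι P)).unit.app Z

/-- Universal property of the reflection unit. -/
theorem s19_unit (Z : C) (W : ObjectProperty.FullSubcategory P) (u : Z ⟶ W.obj) :
    ∃! u' : (reflector (ObjectProperty.ι P)).obj Z ⟶ W,
      s19eta P Z ≫ (ι).map u' = u := by
  refine ⟨((reflectorAdjunction (ι)).homEquiv Z W).symm u, ?_, ?_⟩
  · have h := ((reflectorAdjunction (ι)).homEquiv Z W).apply_symm_apply u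
    rwa [Adjunction.homEquiv_unit] at h
  · intro y hy
    have : ((reflectorAdjunction (ι)).homEquiv Z W) y
        = ((reflectorAdjunction (ι)).homEquiv Z W)
            (((reflectorAdjunction (ι)).homEquiv Z W).symm u) := by
      rw [Equiv.apply_symm_apply, Adjunction.homEquiv_unit]
      exact hy
    exact ((reflectorAdjunction (ι)).homEquiv Z W).injective this


/-- Every zero object of `C` lies in the Birkhoff subcategory. -/
theorem s19_zero_mem (hsub : ∀ {A B : C} (f : A ⟶ B), Mono f → P B → P A)
    {Z0 : C} (h0 : IsZero Z0) : P Z0 := by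
  have hmono : Mono (s19eta P Z0) := ⟨fun g h _ => h0.eq_of_tgt g h⟩
  exact hsub (s19eta P Z0) hmono ((reflector (ι)).obj Z0).property

/-- A zero object of `C` in the subcategory is a zero object there. -/
theorem s19_isZero_up {Z0 : C} (h0 : IsZero Z0) (hP : P Z0) :
    IsZero (⟨Z0, hP⟩ : ObjectProperty.FullSubcategory P) :=
  ⟨fun Y => ⟨⟨⟨ObjectProperty.homMk (h0.to_ Y.obj)⟩, fun _ => InducedCategory.hom_ext (h0.eq_of_src _ _)⟩⟩,
    fun Y => ⟨⟨⟨ObjectProperty.homMk (h0.from_ Y.obj)⟩, fun _ => InducedCategory.hom_ext (h0.eq_of_tgt _ _)⟩⟩⟩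

/-- A zero object of the subcategory is a zero object of `C`. -/
theorem s19_isZero_down [HasZeroObject C]
    (hsub : ∀ {A B : C} (f : A ⟶ B), Mono f → P B → P A)
    {W : ObjectProperty.FullSubcategory P} (hW : IsZero W) : IsZero W.obj := by
  obtain ⟨Z0, h0⟩ := HasZeroObject.zero (C := C)
  have hP := s19_zero_mem P hsub h0
  have e : W ≅ ⟨Z0, hP⟩ := hW.iso (s19_isZero_up P h0 hP)
  exact h0.of_iso ((ι).mapIso e)

/-- Zero morphisms descend from the subcategory to `C`. -/
theorem s19_zeroMor_down [HasZeroObject C]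
    (hsub : ∀ {A B : C} (f : A ⟶ B), Mono f → P B → P A)
    {A B : ObjectProperty.FullSubcategory P} {f : A ⟶ B} (hf : IsZeroMor f) :
    IsZeroMor ((ι).map f) := by
  obtain ⟨Z, hZ, g, h, hgh⟩ := hf
  exact ⟨Z.obj, s19_isZero_down P hsub hZ, g.hom, h.hom, congrArg InducedCategory.Hom.hom hgh⟩

/-- Zero morphisms in `C` between subcategory objects are zero morphisms there. -/
theorem s19_zeroMor_up (hsub : ∀ {A B : C} (f : A ⟶ B), Mono f → P B → P A)
    {A B : ObjectProperty.FullSubcategory P} {f : A ⟶ B} (hf : IsZeroMor ((ι).map f)) :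
    IsZeroMor f := by
  obtain ⟨Z, hZ, g, h, hgh⟩ := hf
  have hP := s19_zero_mem P hsub hZ
  exact ⟨⟨Z, hP⟩, s19_isZero_up P hZ hP, ObjectProperty.homMk g, ObjectProperty.homMk h,
    InducedCategory.hom_ext hgh⟩


/-- Limit pullback cones in the subcategory are limit cones in `C`. -/
noncomputable def s19_pb_up {A B Z Pb : ObjectProperty.FullSubcategory P} {f : A ⟶ B} {g : Z ⟶ B}
    {p1 : Pb ⟶ A} {p2 : Pb ⟶ Z} {h : p1 ≫ f = p2 ≫ g}
    (hl : IsLimit (PullbackCone.mk p1 p2 h))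
    (h' : (ι).map p1 ≫ (ι).map f = (ι).map p2 ≫ (ι).map g) :
    IsLimit (PullbackCone.mk ((ι).map p1) ((ι).map p2) h') := by
  have key : ∀ s : PullbackCone ((ι).map f) ((ι).map g),
      ∃ l : s.pt ⟶ Pb.obj, (l ≫ (ι).map p1 = s.fst ∧ l ≫ (ι).map p2 = s.snd) ∧
        ∀ m : s.pt ⟶ Pb.obj, m ≫ (ι).map p1 = s.fst → m ≫ (ι).map p2 = s.snd → m = l := by
    intro s
    have ha := s19_unit P s.pt A s.fst
    have hb := s19_unit P s.pt Z s.snd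
    have hw : ha.choose ≫ f = hb.choose ≫ g := by
      apply (s19_unit P s.pt B (s.fst ≫ (ι).map f)).unique
      · show s19eta P s.pt ≫ ((ι).map ha.choose ≫ (ι).map f) = _
        rw [← Category.assoc, ha.choose_spec.1]
      · show s19eta P s.pt ≫ ((ι).map hb.choose ≫ (ι).map g) = _
        rw [← Category.assoc, hb.choose_spec.1, s.condition]
    refine ⟨s19eta P s.pt ≫ (ι).map (PullbackCone.IsLimit.lift hl ha.choose hb.choose hw),
      ⟨?_, ?_⟩, ?_⟩
    · have h1 : PullbackCone.IsLimit.lift hl ha.choose hb.choose hw ≫ p1 = ha.choose :=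
        PullbackCone.IsLimit.lift_fst hl _ _ hw
      erw [Category.assoc, ← Functor.map_comp, h1]
      exact ha.choose_spec.1
    · have h2 : PullbackCone.IsLimit.lift hl ha.choose hb.choose hw ≫ p2 = hb.choose :=
        PullbackCone.IsLimit.lift_snd hl _ _ hw
      erw [Category.assoc, ← Functor.map_comp, h2]
      exact hb.choose_spec.1
    · intro m hm1 hm2
      have hm := s19_unit P s.pt Pb m
      have e1 : hm.choose ≫ p1 = ha.choose := by
        refine ha.unique ?_ ha.choose_spec.1
        show s19eta P s.pt ≫ (ι).map (hm.choose ≫ p1) = s.fst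
        rw [Functor.map_comp, ← Category.assoc, hm.choose_spec.1]
        exact hm1
      have e2 : hm.choose ≫ p2 = hb.choose := by
        refine hb.unique ?_ hb.choose_spec.1
        show s19eta P s.pt ≫ (ι).map (hm.choose ≫ p2) = s.snd
        rw [Functor.map_comp, ← Category.assoc, hm.choose_spec.1]
        exact hm2
      have heq : hm.choose = PullbackCone.IsLimit.lift hl ha.choose hb.choose hw := by
        apply PullbackCone.IsLimit.hom_ext hl
        · simp only [PullbackCone.mk_fst]
          erw [e1]
          exact (PullbackCone.IsLimit.lift_fst hl _ _ hw).symm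
        · simp only [PullbackCone.mk_snd]
          erw [e2]
          exact (PullbackCone.IsLimit.lift_snd hl _ _ hw).symm
      rw [← hm.choose_spec.1, heq]
  refine PullbackCone.IsLimit.mk h' (fun s => (key s).choose)
    (fun s => (key s).choose_spec.1.1) (fun s => (key s).choose_spec.1.2)
    (fun s m hm1 hm2 => (key s).choose_spec.2 m hm1 hm2)

/-- Limit pullback cones in `C` between subcategory objects are limit cones there. -/
noncomputable def s19_pb_down {A B Z Pb : ObjectProperty.FullSubcategory P} {f : A ⟶ B} {g : Z ⟶ B}
    {p1 : Pb ⟶ A} {p2 : Pb ⟶ Z} {h' : (ι).map p1 ≫ (ι).map f = (ι).map p2 ≫ (ι).map g}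
    (hl : IsLimit (PullbackCone.mk ((ι).map p1) ((ι).map p2) h'))
    (h : p1 ≫ f = p2 ≫ g) :
    IsLimit (PullbackCone.mk p1 p2 h) := by
  refine PullbackCone.IsLimit.mk h
    (fun s => (ObjectProperty.homMk (PullbackCone.IsLimit.lift hl (s.fst.hom : s.pt.obj ⟶ A.obj)
      (s.snd.hom : s.pt.obj ⟶ Z.obj) (congrArg InducedCategory.Hom.hom s.condition)) : s.pt ⟶ Pb))
    (fun s => InducedCategory.hom_ext (PullbackCone.IsLimit.lift_fst hl _ _ _))
    (fun s => InducedCategory.hom_ext (PullbackCone.IsLimit.lift_snd hl _ _ _)) (fun s m hm1 hm2 => ?_)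
  refine InducedCategory.hom_ext (PullbackCone.IsLimit.hom_ext hl ?_ ?_)
  · erw [PullbackCone.IsLimit.lift_fst hl]
    exact congrArg InducedCategory.Hom.hom hm1
  · erw [PullbackCone.IsLimit.lift_snd hl]
    exact congrArg InducedCategory.Hom.hom hm2


/-- Regular epimorphisms in the subcategory are regular epimorphisms in `C`. -/
theorem s19_regEpi_down [SemiAbelian C]
    (hquot : ∀ {A B : C} (f : A ⟶ B), Nonempty (RegularEpi f) → P A → P B)
    {A B : ObjectProperty.FullSubcategory P} (f : A ⟶ B) (hre : RegularEpi f) :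
    Nonempty (RegularEpi ((ι).map f)) := by
  haveI : HasFiniteLimits C := RegularCat.hasFiniteLimits
  haveI : HasCoequalizer (pullback.fst ((ι).map f) ((ι).map f))
      (pullback.snd ((ι).map f) ((ι).map f)) :=
    RegularCat.hasCoeqOfKernelPair ((ι).map f) _ _ pullback.condition
      ⟨pullbackIsPullback ((ι).map f) ((ι).map f)⟩
  have hQ : P (coequalizer (pullback.fst ((ι).map f) ((ι).map f))
      (pullback.snd ((ι).map f) ((ι).map f))) :=
    hquot (coequalizer.π _ _) ⟨coequalizerRegular _ _⟩ A.property
  have hw : (ι).map hre.left ≫ (ι).map f = (ι).map hre.right ≫ (ι).map f := congrArg InducedCategory.Hom.hom hre.w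
  have hw1 : PullbackCone.IsLimit.lift (pullbackIsPullback ((ι).map f) ((ι).map f))
        ((ι).map hre.left) ((ι).map hre.right) hw ≫ pullback.fst ((ι).map f) ((ι).map f)
      = (ι).map hre.left :=
    PullbackCone.IsLimit.lift_fst _ _ _ hw
  have hw2 : PullbackCone.IsLimit.lift (pullbackIsPullback ((ι).map f) ((ι).map f))
        ((ι).map hre.left) ((ι).map hre.right) hw ≫ pullback.snd ((ι).map f) ((ι).map f)
      = (ι).map hre.right :=
    PullbackCone.IsLimit.lift_snd _ _ _ hw
  have huvq : (ι).map hre.left ≫ coequalizer.π (pullback.fst ((ι).map f) ((ι).map f))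
        (pullback.snd ((ι).map f) ((ι).map f))
      = (ι).map hre.right ≫ coequalizer.π _ _ := by
    conv_lhs => rw [← hw1]
    conv_rhs => rw [← hw2]
    exact (Category.assoc _ _ _).trans ((whisker_eq _ (coequalizer.condition (pullback.fst ((ι).map f) ((ι).map f))
      (pullback.snd ((ι).map f) ((ι).map f)))).trans (Category.assoc _ _ _).symm)
  -- the coequalizer, seen as a morphism of the subcategory
  set QX : ObjectProperty.FullSubcategory P := ⟨_, hQ⟩ with hQX
  have hqXw : hre.left ≫ (show A ⟶ QX from ObjectProperty.homMk (coequalizer.π _ _))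
      = hre.right ≫ (show A ⟶ QX from ObjectProperty.homMk (coequalizer.π _ _)) := InducedCategory.hom_ext huvq
  have ht := Cofork.IsColimit.desc' hre.isColimit (show A ⟶ QX from ObjectProperty.homMk (coequalizer.π _ _)) hqXw
  have hqm : coequalizer.π (pullback.fst ((ι).map f) ((ι).map f))
        (pullback.snd ((ι).map f) ((ι).map f))
        ≫ coequalizer.desc ((ι).map f) pullback.condition = (ι).map f :=
    coequalizer.π_desc _ _
  have htC : (ι).map f ≫ (ι).map ht.1 = coequalizer.π _ _ := congrArg InducedCategory.Hom.hom ht.2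
  have hmt : coequalizer.desc ((ι).map f) pullback.condition ≫ (ι).map ht.1 = 𝟙 _ := by
    apply coequalizer.hom_ext
    rw [← Category.assoc, hqm, htC, Category.comp_id]
  have htmX : ht.1 ≫ (show QX ⟶ B from ObjectProperty.homMk (coequalizer.desc ((ι).map f) pullback.condition))
      = 𝟙 B := by
    apply Cofork.IsColimit.hom_ext hre.isColimit
    show f ≫ ht.1 ≫ (show QX ⟶ B from ObjectProperty.homMk (coequalizer.desc ((ι).map f) pullback.condition))
      = f ≫ 𝟙 B
    rw [Category.comp_id, ← Category.assoc]
    have : f ≫ ht.1 = (show A ⟶ QX from ObjectProperty.homMk (coequalizer.π _ _)) := ht.2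
    rw [this]
    exact InducedCategory.hom_ext hqm
  have htmC : (ι).map ht.1 ≫ coequalizer.desc ((ι).map f) pullback.condition = 𝟙 B.obj := congrArg InducedCategory.Hom.hom htmX
  refine ⟨⟨pullback ((ι).map f) ((ι).map f), pullback.fst _ _, pullback.snd _ _,
    pullback.condition, ?_⟩⟩
  refine Cofork.IsColimit.mk _
    (fun s => (ι).map ht.1 ≫ coequalizer.desc s.π s.condition)
    (fun s => ?_) (fun s m' hm' => ?_)
  · rw [Cofork.π_ofπ, ← Category.assoc]
    have hfq : (ι).map f ≫ (ι).map ht.1 = coequalizer.π _ _ := congrArg InducedCategory.Hom.hom ht.2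
    rw [hfq, coequalizer.π_desc]
  · have hm'' : (ι).map f ≫ m' = s.π := hm'
    have hd : coequalizer.desc ((ι).map f) pullback.condition ≫ m'
        = coequalizer.desc s.π s.condition := by
      apply coequalizer.hom_ext
      rw [← Category.assoc, hqm, coequalizer.π_desc]
      exact hm''
    calc m' = 𝟙 B.obj ≫ m' := (Category.id_comp m').symm
    _ = ((ι).map ht.1 ≫ coequalizer.desc ((ι).map f) pullback.condition) ≫ m' := by
        rw [htmC]
    _ = (ι).map ht.1 ≫ coequalizer.desc s.π s.condition := by
        rw [Category.assoc, hd]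

/-- Regular epimorphisms in `C` between subcategory objects are regular there. -/
theorem s19_regEpi_up [SemiAbelian C] {A B : ObjectProperty.FullSubcategory P} (f : A ⟶ B)
    (hre : RegularEpi ((ι).map f)) : Nonempty (RegularEpi f) := by
  haveI : HasFiniteLimits C := RegularCat.hasFiniteLimits
  haveI : HasLimitsOfShape WalkingCospan (ObjectProperty.FullSubcategory P) :=
    hasLimitsOfShape_of_reflective (ι)
  haveI := hre
  haveI : Epi ((ι).map f) := RegularEpi.epi _ hre
  have h' : (ι).map (pullback.fst f f) ≫ (ι).map f
      = (ι).map (pullback.snd f f) ≫ (ι).map f := congrArg InducedCategory.Hom.hom (pullback.condition (f := f) (g := f))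
  have hlC := s19_pb_up P (pullbackIsPullback f f) h'
  have key : ∀ s : Cofork (pullback.fst f f) (pullback.snd f f),
      ∃ l : B ⟶ s.pt, f ≫ l = s.π ∧ ∀ m : B ⟶ s.pt, f ≫ m = s.π → m = l := by
    intro s
    have hs : (ι).map (pullback.fst f f) ≫ (ι).map s.π
        = (ι).map (pullback.snd f f) ≫ (ι).map s.π := congrArg InducedCategory.Hom.hom s.condition
    have hw1 : PullbackCone.IsLimit.lift hlC hre.left hre.right hre.w
        ≫ (ι).map (pullback.fst f f) = hre.left :=
      PullbackCone.IsLimit.lift_fst hlC _ _ hre.w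
    have hw2 : PullbackCone.IsLimit.lift hlC hre.left hre.right hre.w
        ≫ (ι).map (pullback.snd f f) = hre.right :=
      PullbackCone.IsLimit.lift_snd hlC _ _ hre.w
    have hcoeq : hre.left ≫ (ι).map s.π = hre.right ≫ (ι).map s.π := by
      conv_lhs => rw [← hw1]
      conv_rhs => rw [← hw2]
      exact (Category.assoc _ _ _).trans ((whisker_eq _ hs).trans (Category.assoc _ _ _).symm)
    have hd := Cofork.IsColimit.desc' hre.isColimit ((ι).map s.π) hcoeq
    refine ⟨ObjectProperty.homMk hd.1, InducedCategory.hom_ext hd.2, fun m hm => ?_⟩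
    have : (ι).map f ≫ (ι).map m = (ι).map f ≫ (ι).map (ObjectProperty.homMk hd.1) := by
      have h1 : (ι).map f ≫ (ι).map m = (ι).map s.π := congrArg InducedCategory.Hom.hom hm
      have h2 : (ι).map f ≫ (ι).map (ObjectProperty.homMk hd.1) = (ι).map s.π := hd.2
      rw [h1, h2]
    exact (ι).map_injective ((cancel_epi ((ι).map f)).1 this)
  refine ⟨⟨pullback f f, pullback.fst f f, pullback.snd f f, pullback.condition, ?_⟩⟩
  exact Cofork.IsColimit.mk _ (fun s => (key s).choose)
    (fun s => (key s).choose_spec.1) (fun s m hm => (key s).choose_spec.2 m hm)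


/-- Kernels in the subcategory are kernels in `C`. -/
theorem s19_ker_up [HasZeroObject C]
    (hsub : ∀ {A B : C} (f : A ⟶ B), Mono f → P B → P A)
    {A B K : ObjectProperty.FullSubcategory P} (κ : K ⟶ A) (α : A ⟶ B)
    (hk : IsKernelOf κ α) : IsKernelOf ((ι).map κ) ((ι).map α) := by
  constructor
  · exact s19_zeroMor_down P hsub hk.1
  · intro Z g hz
    have hg := s19_unit P Z A g
    obtain ⟨Z0, hz0, u, v, huv⟩ := hz
    have hP0 : P Z0 := s19_zero_mem P hsub hz0
    have hu := s19_unit P Z (⟨Z0, hP0⟩ : ObjectProperty.FullSubcategory P) u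
    have hclaim : hg.choose ≫ α
        = hu.choose ≫ (show (⟨Z0, hP0⟩ : ObjectProperty.FullSubcategory P) ⟶ B from ObjectProperty.homMk v) := by
      apply (s19_unit P Z B (g ≫ (ι).map α)).unique
      · show s19eta P Z ≫ ((ι).map hg.choose ≫ (ι).map α) = _
        rw [← Category.assoc, hg.choose_spec.1]
      · show s19eta P Z ≫ ((ι).map hu.choose ≫ v) = _
        rw [← Category.assoc, hu.choose_spec.1, ← huv]
    obtain ⟨l', hl', hl'u⟩ := hk.2 hg.choose
      ⟨⟨Z0, hP0⟩, s19_isZero_up P hz0 hP0, hu.choose,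
        (show (⟨Z0, hP0⟩ : ObjectProperty.FullSubcategory P) ⟶ B from ObjectProperty.homMk v), hclaim⟩
    refine ⟨s19eta P Z ≫ (ι).map l', ?_, ?_⟩
    · show (s19eta P Z ≫ (ι).map l') ≫ (ι).map κ = g
      rw [Category.assoc, ← Functor.map_comp, hl']
      exact hg.choose_spec.1
    · intro y hy
      have hym := s19_unit P Z K y
      have e : hym.choose ≫ κ = hg.choose := by
        refine hg.unique ?_ hg.choose_spec.1
        show s19eta P Z ≫ (ι).map (hym.choose ≫ κ) = g
        rw [Functor.map_comp, ← Category.assoc, hym.choose_spec.1]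
        exact hy
      rw [← hym.choose_spec.1, hl'u hym.choose e]

end Aux

/-- A Birkhoff subcategory of a semi-abelian category is semi-abelian. -/
theorem stmt19 {C : Type u} [Category.{v} C] [SemiAbelian C]
    (P : C → Prop) [Reflective (ObjectProperty.ι P)]
    (hrep : ∀ {A B : C}, P A → (A ≅ B) → P B)
    (hsub : ∀ {A B : C} (f : A ⟶ B), Mono f → P B → P A)
    (hquot : ∀ {A B : C} (f : A ⟶ B), Nonempty (RegularEpi f) → P A → P B) :
    SemiAbelian (ObjectProperty.FullSubcategory P) := by
  haveI : HasFiniteLimits C := RegularCat.hasFiniteLimits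
  haveI : HasZeroObject C := SemiAbelian.hasZeroObject
  haveI : HasColimitsOfShape (Discrete WalkingPair) C := SemiAbelian.hasBinaryCoproducts
  haveI hflX : HasFiniteLimits (ObjectProperty.FullSubcategory P) :=
    ⟨fun _J _ _ => hasLimitsOfShape_of_reflective (ObjectProperty.ι P)⟩
  refine
    { hasFiniteLimits := hflX
      hasCoeqOfKernelPair := ?_
      regEpiStable := ?_
      effective := ?_
      hasZeroObject := ?_
      hasBinaryCoproducts := hasColimitsOfShape_of_reflective (ObjectProperty.ι P)
      ssfl := ?_ }
  -- coequalizers of kernel pairs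
  · intro A B R f p1 p2 h hl
    obtain ⟨hlX⟩ := hl
    have h' : (ObjectProperty.ι P).map p1 ≫ (ObjectProperty.ι P).map f
        = (ObjectProperty.ι P).map p2 ≫ (ObjectProperty.ι P).map f := congrArg InducedCategory.Hom.hom h
    have hlC := s19_pb_up P hlX h'
    haveI : HasCoequalizer ((ObjectProperty.ι P).map p1)
        ((ObjectProperty.ι P).map p2) :=
      RegularCat.hasCoeqOfKernelPair ((ObjectProperty.ι P).map f) _ _ h' ⟨hlC⟩
    have hQ : P (coequalizer ((ObjectProperty.ι P).map p1)
        ((ObjectProperty.ι P).map p2)) :=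
      hquot (coequalizer.π _ _) ⟨coequalizerRegular _ _⟩ A.property
    have hcond : p1 ≫ (show A ⟶ (⟨_, hQ⟩ : ObjectProperty.FullSubcategory P) from ObjectProperty.homMk (coequalizer.π ((ObjectProperty.ι P).map p1) ((ObjectProperty.ι P).map p2)))
        = p2 ≫ (show A ⟶ (⟨_, hQ⟩ : ObjectProperty.FullSubcategory P) from ObjectProperty.homMk (coequalizer.π ((ObjectProperty.ι P).map p1) ((ObjectProperty.ι P).map p2))) :=
      InducedCategory.hom_ext (coequalizer.condition ((ObjectProperty.ι P).map p1) ((ObjectProperty.ι P).map p2))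
    have key : ∀ s : Cofork p1 p2,
        ∃ l : (⟨_, hQ⟩ : ObjectProperty.FullSubcategory P) ⟶ s.pt,
          ((show A ⟶ (⟨_, hQ⟩ : ObjectProperty.FullSubcategory P) from ObjectProperty.homMk (coequalizer.π ((ObjectProperty.ι P).map p1) ((ObjectProperty.ι P).map p2))) ≫ l = s.π) ∧
          ∀ m : (⟨_, hQ⟩ : ObjectProperty.FullSubcategory P) ⟶ s.pt,
            (show A ⟶ (⟨_, hQ⟩ : ObjectProperty.FullSubcategory P) from ObjectProperty.homMk (coequalizer.π ((ObjectProperty.ι P).map p1) ((ObjectProperty.ι P).map p2))) ≫ m = s.π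
              → m = l := by
      intro s
      have hs : (ObjectProperty.ι P).map p1 ≫ (ObjectProperty.ι P).map s.π
          = (ObjectProperty.ι P).map p2 ≫ (ObjectProperty.ι P).map s.π :=
        congrArg InducedCategory.Hom.hom s.condition
      refine ⟨ObjectProperty.homMk (coequalizer.desc ((ObjectProperty.ι P).map s.π) hs),
        InducedCategory.hom_ext (coequalizer.π_desc _ _), fun m hm => ?_⟩
      refine InducedCategory.hom_ext (coequalizer.hom_ext (f := (ObjectProperty.ι P).map p1)
        (g := (ObjectProperty.ι P).map p2) ?_)
      rw [ObjectProperty.homMk_hom, coequalizer.π_desc]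
      exact congrArg InducedCategory.Hom.hom hm
    exact HasColimit.mk ⟨Cofork.ofπ _ hcond,
      Cofork.IsColimit.mk _ (fun s => (key s).choose) (fun s => (key s).choose_spec.1)
        (fun s m hm => (key s).choose_spec.2 m hm)⟩
  -- stability of regular epis under pullback
  · intro Pb A B Z f g p1 p2 h hl hre
    obtain ⟨hlX⟩ := hl
    obtain ⟨hreX⟩ := hre
    have h' : (ObjectProperty.ι P).map p1 ≫ (ObjectProperty.ι P).map f
        = (ObjectProperty.ι P).map p2 ≫ (ObjectProperty.ι P).map g := congrArg InducedCategory.Hom.hom h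
    have hlC := s19_pb_up P hlX h'
    obtain ⟨hp2⟩ := RegularCat.regEpiStable ((ObjectProperty.ι P).map f)
      ((ObjectProperty.ι P).map g) ((ObjectProperty.ι P).map p1)
      ((ObjectProperty.ι P).map p2) h' ⟨hlC⟩ (s19_regEpi_down P hquot f hreX)
    exact s19_regEpi_up P p2 hp2
  -- effectiveness of equivalence relations
  · intro A ρ hEq
    haveI : HasLimitsOfShape WalkingCospan (ObjectProperty.FullSubcategory P) :=
      hasLimitsOfShape_of_reflective (ObjectProperty.ι P)
    obtain ⟨hrefl, hsymm, htrans⟩ := hEq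
    have hq' : (ObjectProperty.ι P).map (pullback.fst ρ.r2 ρ.r1)
          ≫ (ObjectProperty.ι P).map ρ.r2
        = (ObjectProperty.ι P).map (pullback.snd ρ.r2 ρ.r1)
          ≫ (ObjectProperty.ι P).map ρ.r1 :=
      congrArg InducedCategory.Hom.hom (pullback.condition (f := ρ.r2) (g := ρ.r1))
    have hlQ := s19_pb_up P (pullbackIsPullback ρ.r2 ρ.r1) hq'
    obtain ⟨t, ht1, ht2⟩ := htrans (pullback.fst ρ.r2 ρ.r1) (pullback.snd ρ.r2 ρ.r1)
      (pullback.condition (f := ρ.r2) (g := ρ.r1))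
    -- joint monicity in the ambient category
    have jm : ∀ {Z : C} (f g : Z ⟶ ρ.R.obj),
        f ≫ (ObjectProperty.ι P).map ρ.r1 = g ≫ (ObjectProperty.ι P).map ρ.r1 →
        f ≫ (ObjectProperty.ι P).map ρ.r2 = g ≫ (ObjectProperty.ι P).map ρ.r2 →
        f = g := by
      intro Z f g h1 h2
      have hf := s19_unit P Z ρ.R f
      have hg := s19_unit P Z ρ.R g
      have e1 : hf.choose ≫ ρ.r1 = hg.choose ≫ ρ.r1 := by
        apply (s19_unit P Z A (f ≫ (ObjectProperty.ι P).map ρ.r1)).unique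
        · show s19eta P Z ≫ ((ObjectProperty.ι P).map hf.choose
            ≫ (ObjectProperty.ι P).map ρ.r1) = _
          rw [← Category.assoc, hf.choose_spec.1]
        · show s19eta P Z ≫ ((ObjectProperty.ι P).map hg.choose
            ≫ (ObjectProperty.ι P).map ρ.r1) = _
          rw [← Category.assoc, hg.choose_spec.1, h1]
      have e2 : hf.choose ≫ ρ.r2 = hg.choose ≫ ρ.r2 := by
        apply (s19_unit P Z A (f ≫ (ObjectProperty.ι P).map ρ.r2)).unique
        · show s19eta P Z ≫ ((ObjectProperty.ι P).map hf.choose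
            ≫ (ObjectProperty.ι P).map ρ.r2) = _
          rw [← Category.assoc, hf.choose_spec.1]
        · show s19eta P Z ≫ ((ObjectProperty.ι P).map hg.choose
            ≫ (ObjectProperty.ι P).map ρ.r2) = _
          rw [← Category.assoc, hg.choose_spec.1, h2]
      rw [← hf.choose_spec.1, ← hg.choose_spec.1, ρ.jmono hf.choose hg.choose e1 e2]
    -- the relation, seen in the ambient category, is an equivalence relation
    have hEff := ExactCat.effective
      (X := A.obj) ⟨ρ.R.obj, (ObjectProperty.ι P).map ρ.r1,
        (ObjectProperty.ι P).map ρ.r2, jm⟩ ?_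
    swap
    · refine ⟨?_, ?_, ?_⟩
      · obtain ⟨δ, hδ1, hδ2⟩ := hrefl
        exact ⟨(ObjectProperty.ι P).map δ, congrArg InducedCategory.Hom.hom hδ1, congrArg InducedCategory.Hom.hom hδ2⟩
      · obtain ⟨σ, hσ1, hσ2⟩ := hsymm
        exact ⟨(ObjectProperty.ι P).map σ, congrArg InducedCategory.Hom.hom hσ1, congrArg InducedCategory.Hom.hom hσ2⟩
      · intro Z a b hab
        have hab' : a ≫ (ObjectProperty.ι P).map ρ.r2
            = b ≫ (ObjectProperty.ι P).map ρ.r1 := hab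
        have hu1 : PullbackCone.IsLimit.lift hlQ a b hab'
            ≫ (ObjectProperty.ι P).map (pullback.fst ρ.r2 ρ.r1) = a :=
          PullbackCone.IsLimit.lift_fst hlQ _ _ hab'
        have hu2 : PullbackCone.IsLimit.lift hlQ a b hab'
            ≫ (ObjectProperty.ι P).map (pullback.snd ρ.r2 ρ.r1) = b :=
          PullbackCone.IsLimit.lift_snd hlQ _ _ hab'
        have ht1C : (ObjectProperty.ι P).map t ≫ (ObjectProperty.ι P).map ρ.r1
            = (ObjectProperty.ι P).map (pullback.fst ρ.r2 ρ.r1)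
              ≫ (ObjectProperty.ι P).map ρ.r1 := congrArg InducedCategory.Hom.hom ht1
        have ht2C : (ObjectProperty.ι P).map t ≫ (ObjectProperty.ι P).map ρ.r2
            = (ObjectProperty.ι P).map (pullback.snd ρ.r2 ρ.r1)
              ≫ (ObjectProperty.ι P).map ρ.r2 := congrArg InducedCategory.Hom.hom ht2
        refine ⟨PullbackCone.IsLimit.lift hlQ a b hab' ≫ (ObjectProperty.ι P).map t,
          ?_, ?_⟩
        · show (PullbackCone.IsLimit.lift hlQ a b hab' ≫ (ObjectProperty.ι P).map t)
              ≫ (ObjectProperty.ι P).map ρ.r1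
            = a ≫ (ObjectProperty.ι P).map ρ.r1
          erw [Category.assoc, ht1C, ← Category.assoc, hu1]
        · show (PullbackCone.IsLimit.lift hlQ a b hab' ≫ (ObjectProperty.ι P).map t)
              ≫ (ObjectProperty.ι P).map ρ.r2
            = b ≫ (ObjectProperty.ι P).map ρ.r2
          erw [Category.assoc, ht2C, ← Category.assoc, hu2]
    obtain ⟨Y, φ, hφ, ⟨hlφ⟩⟩ := hEff
    have hφ' : (ObjectProperty.ι P).map ρ.r1 ≫ φ
        = (ObjectProperty.ι P).map ρ.r2 ≫ φ := hφ
    haveI : HasCoequalizer ((ObjectProperty.ι P).map ρ.r1)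
        ((ObjectProperty.ι P).map ρ.r2) :=
      RegularCat.hasCoeqOfKernelPair φ _ _ hφ' ⟨hlφ⟩
    have hQ : P (coequalizer ((ObjectProperty.ι P).map ρ.r1)
        ((ObjectProperty.ι P).map ρ.r2)) :=
      hquot (coequalizer.π _ _) ⟨coequalizerRegular _ _⟩ A.property
    have hqm : coequalizer.π ((ObjectProperty.ι P).map ρ.r1)
          ((ObjectProperty.ι P).map ρ.r2) ≫ coequalizer.desc φ hφ' = φ :=
      coequalizer.π_desc _ _
    have hcond : (ObjectProperty.ι P).map ρ.r1 ≫ coequalizer.π ((ObjectProperty.ι P).map ρ.r1) ((ObjectProperty.ι P).map ρ.r2)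
        = (ObjectProperty.ι P).map ρ.r2 ≫ coequalizer.π ((ObjectProperty.ι P).map ρ.r1) ((ObjectProperty.ι P).map ρ.r2) :=
      coequalizer.condition ((ObjectProperty.ι P).map ρ.r1) ((ObjectProperty.ι P).map ρ.r2)
    have hsφ : ∀ s : PullbackCone
        (coequalizer.π ((ObjectProperty.ι P).map ρ.r1)
          ((ObjectProperty.ι P).map ρ.r2))
        (coequalizer.π ((ObjectProperty.ι P).map ρ.r1)
          ((ObjectProperty.ι P).map ρ.r2)),
        s.fst ≫ φ = s.snd ≫ φ := by
      intro s
      rw [← hqm, ← Category.assoc, s.condition, Category.assoc]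
    have hlq : IsLimit (PullbackCone.mk ((ObjectProperty.ι P).map ρ.r1)
        ((ObjectProperty.ι P).map ρ.r2) hcond) := by
      refine PullbackCone.IsLimit.mk hcond
        (fun s => PullbackCone.IsLimit.lift hlφ s.fst s.snd (hsφ s))
        (fun s => PullbackCone.IsLimit.lift_fst hlφ _ _ _)
        (fun s => PullbackCone.IsLimit.lift_snd hlφ _ _ _)
        (fun s m' h1 h2 => ?_)
      apply PullbackCone.IsLimit.hom_ext hlφ
      · rw [PullbackCone.IsLimit.lift_fst hlφ]
        exact h1
      · rw [PullbackCone.IsLimit.lift_snd hlφ]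
        exact h2
    have hcondX : ρ.r1 ≫ (show A ⟶ (⟨_, hQ⟩ : ObjectProperty.FullSubcategory P) from ObjectProperty.homMk (coequalizer.π ((ObjectProperty.ι P).map ρ.r1) ((ObjectProperty.ι P).map ρ.r2)))
        = ρ.r2 ≫ (show A ⟶ (⟨_, hQ⟩ : ObjectProperty.FullSubcategory P) from ObjectProperty.homMk (coequalizer.π ((ObjectProperty.ι P).map ρ.r1) ((ObjectProperty.ι P).map ρ.r2))) := InducedCategory.hom_ext hcond
    exact ⟨⟨_, hQ⟩, (show A ⟶ (⟨_, hQ⟩ : ObjectProperty.FullSubcategory P) from ObjectProperty.homMk (coequalizer.π ((ObjectProperty.ι P).map ρ.r1) ((ObjectProperty.ι P).map ρ.r2))), hcondX,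
      ⟨s19_pb_down P (h' := hcond) hlq hcondX⟩⟩
  -- zero object
  · obtain ⟨Z0, h0⟩ := HasZeroObject.zero (C := C)
    exact ⟨⟨Z0, s19_zero_mem P hsub h0⟩, s19_isZero_up P h0 _⟩
  -- split short five lemma
  · intro A B B' Co k p s k' p' s' b hs hs' hk hk' hkb hbp hsb
    have h1 : (ObjectProperty.ι P).map s ≫ (ObjectProperty.ι P).map p
        = 𝟙 Co.obj := congrArg InducedCategory.Hom.hom hs
    have h2 : (ObjectProperty.ι P).map s' ≫ (ObjectProperty.ι P).map p'
        = 𝟙 Co.obj := congrArg InducedCategory.Hom.hom hs'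
    have h3 : (ObjectProperty.ι P).map k ≫ (ObjectProperty.ι P).map b
        = (ObjectProperty.ι P).map k' := congrArg InducedCategory.Hom.hom hkb
    have h4 : (ObjectProperty.ι P).map b ≫ (ObjectProperty.ι P).map p'
        = (ObjectProperty.ι P).map p := congrArg InducedCategory.Hom.hom hbp
    have h5 : (ObjectProperty.ι P).map s ≫ (ObjectProperty.ι P).map b
        = (ObjectProperty.ι P).map s' := congrArg InducedCategory.Hom.hom hsb
    have hiso := SemiAbelian.ssfl ((ObjectProperty.ι P).map k)
      ((ObjectProperty.ι P).map p) ((ObjectProperty.ι P).map s)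
      ((ObjectProperty.ι P).map k') ((ObjectProperty.ι P).map p')
      ((ObjectProperty.ι P).map s') ((ObjectProperty.ι P).map b)
      h1 h2 (s19_ker_up P hsub k p hk) (s19_ker_up P hsub k' p' hk') h3 h4 h5
    obtain ⟨binv, hb1, hb2⟩ := hiso.out
    exact ⟨⟨ObjectProperty.homMk binv, InducedCategory.hom_ext hb1, InducedCategory.hom_ext hb2⟩⟩
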